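/- Let p : ℝ → ℝ satisfy monotonicity: for all t₁, t₂, t₃ ∈ ℝ, |t₁ − t₂| > |t₁ − t₃| if and only if |p(t₁) − p(t₂)| > |p(t₁) − p(t₃)|. Then p is strictly monotone, i.e., p is either strictly increasing or strictly decreasing on ℝ. -/
import Mathlib


theorem monotonicity_implies_strict_monotone
    (p : ℝ → ℝ)
    (hmono : ∀ t₁ t₂ t₃ : ℝ, |t₁ - t₂| > |t₁ - t₃| ↔ |p t₁ - p t₂| > |p t₁ - p t₃|) :
    StrictMono p ∨ StrictAnti p := by
  -- injectivity
  have hinj : ∀ a b : ℝ, a ≠ b → p a ≠ p b := by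
    intro a b hab h
    have h1 : |a - b| > |a - a| := by
      rw [sub_self, abs_zero]
      exact abs_pos.mpr (sub_ne_zero.mpr hab)
    have := (hmono a b a).mp h1
    rw [sub_self, abs_zero, h, sub_self, abs_zero] at this
    exact lt_irrefl 0 this
  -- betweenness lemma
  have B : ∀ x y z : ℝ, x < y → y < z →
      (p x < p y ∧ p y < p z) ∨ (p z < p y ∧ p y < p x) := by
    intro x y z hxy hyz
    have h1 : |p x - p z| > |p x - p y| := by
      refine (hmono x z y).mp ?_
      rw [abs_of_nonpos (by linarith), abs_of_nonpos (by linarith)]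
      linarith
    have h2 : |p z - p x| > |p z - p y| := by
      refine (hmono z x y).mp ?_
      rw [abs_of_nonneg (by linarith), abs_of_nonneg (by linarith)]
      linarith
    have a1 := le_abs_self (p x - p y)
    have a2 := neg_abs_le (p x - p y)
    have a3 := le_abs_self (p z - p y)
    have a4 := neg_abs_le (p z - p y)
    rcases lt_trichotomy (p x) (p z) with h | h | h
    · left
      rw [abs_of_nonpos (by linarith)] at h1
      rw [abs_of_nonneg (by linarith)] at h2
      constructor <;> linarith
    · exfalso
      rw [h, sub_self, abs_zero] at h1
      have := abs_nonneg (p x - p y)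
      linarith
    · right
      rw [abs_of_nonneg (by linarith)] at h1
      rw [abs_of_nonpos (by linarith)] at h2
      constructor <;> linarith
  -- sign transfer helper: a < b, c < b ⇒ derived facts via B
  have sign : ∀ a b c d : ℝ, a < b → c < d → (p a < p b ↔ p c < p d) := by
    intro a b c d hab hcd
    set m := min a c - 1 with hm
    set M := max b d + 1 with hM
    have hma : m < a := by
      have : min a c ≤ a := min_le_left a c
      linarith
    have hmc : m < c := by
      have : min a c ≤ c := min_le_right a c
      linarith
    have hma' : min a c ≤ a := min_le_left a c
    have hma2 : m < a := by linarith
    have hbM : b < M := by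
      have : b ≤ max b d := le_max_left b d
      linarith
    have hdM : d < M := by
      have : d ≤ max b d := le_max_right b d
      linarith
    have key : ∀ x y : ℝ, m < x → x < y → y < M → (p x < p y ↔ p m < p M) := by
      intro x y hmx hxy hyM
      rcases B m x y hmx hxy with ⟨u1, u2⟩ | ⟨u1, u2⟩
      · rcases B m y M (hmx.trans hxy) hyM with ⟨v1, v2⟩ | ⟨v1, v2⟩
        · constructor <;> intro <;> linarith
        · linarith
      · rcases B m y M (hmx.trans hxy) hyM with ⟨v1, v2⟩ | ⟨v1, v2⟩
        · linarith
        · constructor <;> intro <;> linarith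
    rw [key a b hma2 hab hbM, key c d hmc hcd hdM]
  by_cases h01 : p 0 < p 1
  · left
    intro a b hab
    exact (sign a b 0 1 hab one_pos).mpr h01
  · right
    intro a b hab
    have hne : p a ≠ p b := hinj a b (ne_of_lt hab)
    have : ¬ p a < p b := fun h => h01 ((sign a b 0 1 hab one_pos).mp h)
    rcases lt_or_gt_of_ne hne with h | h
    · exact absurd h this
    · exact h
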